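/- Let V ≥ δ > 0 on Ω. If u ∈ H₀^{P₀}(Ω) is nonzero with δ ≥ 2‖P₀u‖/‖u‖, then choosing λ = δ/2 gives B_λ(u,u) ≤ (1/δ)‖P₀u‖² − (δ/4)‖u‖² ≤ 0, where B_λ(u,u) = ⟨(1/V)(P₀−λ)u, (P₀+V−λ)u⟩. -/

import Mathlib

/- If V ≥ δ > 0 (so multiplication W by 1/V satisfies ⟨Wf,f⟩ ≤ (1/δ)‖f‖²) and
   u ≠ 0 satisfies δ ≥ 2‖P₀u‖/‖u‖, then with λ = δ/2 the quadratic form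
   B_λ(u,u) = ⟨(1/V)(P₀−λ)u, (P₀+V−λ)u⟩ satisfies
   B_λ(u,u) ≤ (1/δ)‖P₀u‖² − (δ/4)‖u‖² ≤ 0. -/
theorem stmt6 {E : Type*} [NormedAddCommGroup E] [InnerProductSpace ℂ E]
    (P₀ W V : E →ₗ[ℂ] E) (δ : ℝ) (hδ : 0 < δ)
    (hWsym : ∀ f g : E, (inner ℂ (W f) g : ℂ) = inner ℂ f (W g))
    (hWV : ∀ f : E, W (V f) = f)
    (hWup : ∀ f : E, (inner ℂ (W f) f : ℂ).re ≤ 1 / δ * ‖f‖ ^ 2)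
    (hPreal : ∀ f : E, (inner ℂ (P₀ f) f : ℂ).im = 0)
    (u : E) (hu : u ≠ 0) (hsmall : δ ≥ 2 * ‖P₀ u‖ / ‖u‖) :
    (inner ℂ (W (P₀ u - ((δ / 2 : ℝ) : ℂ) • u))
        (P₀ u + V u - ((δ / 2 : ℝ) : ℂ) • u) : ℂ).re
      ≤ 1 / δ * ‖P₀ u‖ ^ 2 - δ / 4 * ‖u‖ ^ 2 ∧
    1 / δ * ‖P₀ u‖ ^ 2 - δ / 4 * ‖u‖ ^ 2 ≤ 0 := by
  have hu' : (0:ℝ) < ‖u‖ := norm_pos_iff.mpr hu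
  have hsmall' : 2 * ‖P₀ u‖ ≤ δ * ‖u‖ := by
    have := (div_le_iff₀ hu').mp hsmall
    linarith
  constructor
  · set c : ℂ := ((δ / 2 : ℝ) : ℂ) with hc
    set f : E := P₀ u - c • u with hf
    have hfv : P₀ u + V u - c • u = f + V u := by rw [hf]; abel
    rw [hfv, inner_add_right, hWsym f (V u), hWV]
    have h1 : (inner ℂ (W f) f : ℂ).re ≤ 1 / δ * ‖f‖ ^ 2 := hWup f
    have hnorm : ‖f‖ ^ 2 = ‖P₀ u‖ ^ 2 - 2 * ((δ/2) * (inner ℂ (P₀ u) u : ℂ).re)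
        + (δ/2)^2 * ‖u‖ ^ 2 := by
      rw [hf, @norm_sub_sq ℂ]
      rw [inner_smul_right]
      simp [hc, Complex.mul_re, Complex.ofReal_re, Complex.ofReal_im, norm_smul,
        Complex.norm_real, abs_of_pos (by positivity : (0:ℝ) < δ/2)]
      rw [abs_of_pos hδ]; ring
    have h2 : (inner ℂ f u : ℂ).re = (inner ℂ (P₀ u) u : ℂ).re - δ/2 * ‖u‖ ^ 2 := by
      rw [hf, inner_sub_left, inner_smul_left, Complex.conj_ofReal]
      simp [Complex.mul_re, Complex.ofReal_re, Complex.ofReal_im,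
        inner_self_eq_norm_sq_to_K, ← Complex.ofReal_pow]
    have key : 1/δ * ‖f‖ ^ 2 = 1/δ * ‖P₀ u‖ ^ 2 - (inner ℂ (P₀ u) u : ℂ).re
        + δ/4 * ‖u‖ ^ 2 := by
      rw [hnorm]; field_simp; ring
    simp only [Complex.add_re]
    linarith
  · have h3 : 4 * ‖P₀ u‖ ^ 2 ≤ δ^2 * ‖u‖ ^ 2 := by nlinarith [norm_nonneg (P₀ u)]
    rw [sub_nonpos, one_div, inv_mul_le_iff₀ hδ]
    nlinarith
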